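/- Let N, D ≥ 1, ρ > 0, μ ∈ ℝ^N, σ ∈ ℝ^{N×D}, x₀ ∈ ℝ^N and ε > 0. Define, for G₀ > 0, ψ(x) = G₀(‖x − x₀‖² − ε²), and define the operator Lψ(x) = (1/2) ∑_{i,j=1}^N (σσ^T)_{ij} ∂²_{x^i x^j} ψ(x) + ∑_{i=1}^N μ_i ∂_{x^i} ψ(x). Then there exists G₀ > 0 such that: (i) ρ ψ(x) − Lψ(x) + 1 ≥ 0 for all x in the closed ball of radius ε around x₀; (ii) |∂_{x^i} ψ(x)| ≤ 1 for all such x and every i = 1,…,N; and (iii) ψ(x) = 0 for every x on the sphere ‖x − x₀‖ = ε. -/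

import Mathlib

noncomputable def pd {N : ℕ} (f : (Fin N → ℝ) → ℝ) (i : Fin N) (x : Fin N → ℝ) : ℝ :=
  deriv (fun t => f (Function.update x i t)) (x i)

lemma pd_quad {N : ℕ} (G₀ c : ℝ) (x₀ : Fin N → ℝ) (i : Fin N) (x : Fin N → ℝ) :
    pd (fun x => G₀ * ((∑ j, (x j - x₀ j) ^ 2) - c)) i x = 2 * G₀ * (x i - x₀ i) := by
  unfold pd
  have hs : HasDerivAt (fun t => ∑ j, (Function.update x i t j - x₀ j) ^ 2)
      (∑ j, if j = i then 2 * (x i - x₀ i) else 0) (x i) := by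
    apply HasDerivAt.fun_sum
    intro j _
    rcases eq_or_ne j i with rfl | hji
    · have hfun : (fun t => (Function.update x j t j - x₀ j) ^ 2)
          = fun t => (t - x₀ j) ^ 2 := by
        funext t; rw [Function.update_self]
      rw [hfun, if_pos rfl]
      simpa using ((hasDerivAt_id (x j)).sub_const (x₀ j)).fun_pow 2
    · have hfun : (fun t => (Function.update x i t j - x₀ j) ^ 2)
          = fun _ => (x j - x₀ j) ^ 2 := by
        funext t; rw [Function.update_of_ne hji]
      rw [hfun, if_neg hji]
      exact hasDerivAt_const _ _
  have h := (hs.sub_const c).const_mul G₀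
  have h2 : HasDerivAt (fun t => G₀ * ((∑ j, (Function.update x i t j - x₀ j) ^ 2) - c))
      (2 * G₀ * (x i - x₀ i)) (x i) := by
    refine h.congr_deriv ?_
    rw [Finset.sum_ite_eq' Finset.univ i]
    simp; ring
  exact h2.deriv

lemma pd_lin {N : ℕ} (a : ℝ) (x₀ : Fin N → ℝ) (j i : Fin N) (x : Fin N → ℝ) :
    pd (fun x => a * (x j - x₀ j)) i x = if j = i then a else 0 := by
  unfold pd
  rcases eq_or_ne j i with rfl | hji
  · have hfun : (fun t => a * (Function.update x j t j - x₀ j))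
        = fun t => a * (t - x₀ j) := by funext t; rw [Function.update_self]
    rw [hfun, if_pos rfl]
    have : HasDerivAt (fun t => a * (t - x₀ j)) a (x j) := by
      simpa using ((hasDerivAt_id (x j)).sub_const (x₀ j)).const_mul a
    exact this.deriv
  · have hfun : (fun t => a * (Function.update x i t j - x₀ j))
        = fun _ => a * (x j - x₀ j) := by funext t; rw [Function.update_of_ne hji]
    rw [hfun, if_neg hji]
    exact deriv_const _ _

set_option maxHeartbeats 1000000 in
theorem barrier_function_exists
    {N D : ℕ} (hN : 1 ≤ N) (hD : 1 ≤ D) (ρ : ℝ) (hρ : 0 < ρ)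
    (μ : Fin N → ℝ) (σ : Fin N → Fin D → ℝ) (x₀ : Fin N → ℝ) (ε : ℝ) (hε : 0 < ε) :
    ∃ G₀ : ℝ, 0 < G₀ ∧
      (let ψ : (Fin N → ℝ) → ℝ := fun x => G₀ * ((∑ i, (x i - x₀ i) ^ 2) - ε ^ 2);
       let Lψ : (Fin N → ℝ) → ℝ := fun x =>
         (1/2) * (∑ i, ∑ j, (∑ d, σ i d * σ j d) * pd (pd ψ j) i x)
           + ∑ i, μ i * pd ψ i x;
       (∀ x : Fin N → ℝ, (∑ i, (x i - x₀ i) ^ 2) ≤ ε ^ 2 →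
          0 ≤ ρ * ψ x - Lψ x + 1) ∧
       (∀ x : Fin N → ℝ, (∑ i, (x i - x₀ i) ^ 2) ≤ ε ^ 2 →
          ∀ i, |pd ψ i x| ≤ 1) ∧
       (∀ x : Fin N → ℝ, (∑ i, (x i - x₀ i) ^ 2) = ε ^ 2 → ψ x = 0)) := by
  have hT : (0:ℝ) ≤ ∑ i, ∑ d, (σ i d) ^ 2 := by positivity
  have hM : (0:ℝ) ≤ ∑ i, |μ i| := by positivity
  set T : ℝ := ∑ i, ∑ d, (σ i d) ^ 2 with hTdef
  set M : ℝ := ∑ i, |μ i| with hMdef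
  set K : ℝ := 1 + ρ * ε ^ 2 + T + 2 * M * ε + 2 * ε with hKdef
  have hK : 0 < K := by positivity
  set G₀ : ℝ := 1 / K with hG
  have hG0 : 0 < G₀ := by positivity
  have hGK : G₀ * (1 + ρ * ε ^ 2 + T + 2 * M * ε + 2 * ε) = 1 := by
    rw [hG, ← hKdef]; field_simp
  have hpd : ∀ (i : Fin N) (x : Fin N → ℝ),
      pd (fun x => G₀ * ((∑ j, (x j - x₀ j) ^ 2) - ε ^ 2)) i x
      = 2 * G₀ * (x i - x₀ i) := fun i x => pd_quad G₀ (ε ^ 2) x₀ i x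
  have hpdf : ∀ j : Fin N, pd (fun x => G₀ * ((∑ k, (x k - x₀ k) ^ 2) - ε ^ 2)) j
      = fun x => (2 * G₀) * (x j - x₀ j) := by
    intro j; funext y; simpa [mul_assoc] using hpd j y
  have hpd2 : ∀ (i j : Fin N) (x : Fin N → ℝ),
      pd (pd (fun x => G₀ * ((∑ k, (x k - x₀ k) ^ 2) - ε ^ 2)) j) i x
      = if j = i then 2 * G₀ else 0 := by
    intro i j x
    rw [hpdf j]
    exact pd_lin (2 * G₀) x₀ j i x
  have habs : ∀ (x : Fin N → ℝ), (∑ i, (x i - x₀ i) ^ 2) ≤ ε ^ 2 →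
      ∀ i, |x i - x₀ i| ≤ ε := by
    intro x hx i
    have h1 : (x i - x₀ i) ^ 2 ≤ ε ^ 2 :=
      le_trans (Finset.single_le_sum (fun j _ => sq_nonneg (x j - x₀ j))
        (Finset.mem_univ i)) hx
    rw [abs_le]
    constructor <;> nlinarith
  refine ⟨G₀, hG0, ?_, ?_, ?_⟩
  · -- first inequality
    intro x hx
    have hs0 : (0:ℝ) ≤ ∑ i, (x i - x₀ i) ^ 2 := by positivity
    have hsec : (∑ i, ∑ j, (∑ d, σ i d * σ j d) *
        pd (pd (fun x => G₀ * ((∑ k, (x k - x₀ k) ^ 2) - ε ^ 2)) j) i x)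
        = 2 * G₀ * T := by
      have : ∀ i : Fin N, (∑ j, (∑ d, σ i d * σ j d) *
          pd (pd (fun x => G₀ * ((∑ k, (x k - x₀ k) ^ 2) - ε ^ 2)) j) i x)
          = 2 * G₀ * (∑ d, (σ i d) ^ 2) := by
        intro i
        rw [Finset.sum_eq_single i]
        · rw [hpd2 i i x, if_pos rfl]
          rw [mul_comm]
          congr 1
          exact Finset.sum_congr rfl fun d _ => (sq (σ i d)) ▸ rfl
        · intro j _ hji; rw [hpd2 i j x, if_neg hji, mul_zero]
        · intro h; exact absurd (Finset.mem_univ i) h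
      rw [Finset.sum_congr rfl fun i _ => this i, ← Finset.mul_sum, hTdef]
    have hfirst : (∑ i, μ i * pd (fun x => G₀ * ((∑ k, (x k - x₀ k) ^ 2) - ε ^ 2)) i x)
        = 2 * G₀ * ∑ i, μ i * (x i - x₀ i) := by
      rw [Finset.mul_sum]
      exact Finset.sum_congr rfl fun i _ => by rw [hpd i x]; ring
    have hμ : |∑ i, μ i * (x i - x₀ i)| ≤ M * ε := by
      calc |∑ i, μ i * (x i - x₀ i)| ≤ ∑ i, |μ i * (x i - x₀ i)| :=
            Finset.abs_sum_le_sum_abs _ _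
        _ ≤ ∑ i, |μ i| * ε := by
            refine Finset.sum_le_sum fun i _ => ?_
            rw [abs_mul]
            exact mul_le_mul_of_nonneg_left (habs x hx i) (abs_nonneg _)
        _ = M * ε := by rw [hMdef, ← Finset.sum_mul]
    show 0 ≤ ρ * (G₀ * ((∑ i, (x i - x₀ i) ^ 2) - ε ^ 2)) -
        ((1/2) * (∑ i, ∑ j, (∑ d, σ i d * σ j d) *
          pd (pd (fun x => G₀ * ((∑ k, (x k - x₀ k) ^ 2) - ε ^ 2)) j) i x)
          + ∑ i, μ i * pd (fun x => G₀ * ((∑ k, (x k - x₀ k) ^ 2) - ε ^ 2)) i x) + 1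
    rw [hsec, hfirst]
    set S : ℝ := ∑ i, μ i * (x i - x₀ i)
    have hS := abs_le.mp hμ
    set s : ℝ := ∑ i, (x i - x₀ i) ^ 2
    have hA : 0 ≤ ρ * G₀ * s := by positivity
    have hB : 0 ≤ G₀ * (M * ε - S) := mul_nonneg hG0.le (by linarith [hS.2])
    nlinarith [hGK, mul_nonneg hG0.le hε.le]
  · -- gradient bound
    intro x hx i
    show |pd (fun x => G₀ * ((∑ k, (x k - x₀ k) ^ 2) - ε ^ 2)) i x| ≤ 1
    rw [hpd i x]
    have h1 : |2 * G₀ * (x i - x₀ i)| = 2 * G₀ * |x i - x₀ i| := by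
      rw [abs_mul, abs_of_nonneg (by positivity : (0:ℝ) ≤ 2 * G₀)]
    rw [h1]
    have h2 : 2 * G₀ * |x i - x₀ i| ≤ 2 * G₀ * ε :=
      mul_le_mul_of_nonneg_left (habs x hx i) (by positivity)
    have hexp : G₀ + G₀ * (ρ * ε ^ 2) + G₀ * T + G₀ * (2 * M * ε) + G₀ * (2 * ε) = 1 := by
      rw [← hGK]; ring
    have e1 : (0:ℝ) ≤ G₀ * (ρ * ε ^ 2) := by positivity
    have e2 : (0:ℝ) ≤ G₀ * T := mul_nonneg hG0.le hT
    have e3 : (0:ℝ) ≤ G₀ * (2 * M * ε) := by positivity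
    have h3 : 2 * G₀ * ε = G₀ * (2 * ε) := by ring
    linarith
  · intro x hx
    show G₀ * ((∑ i, (x i - x₀ i) ^ 2) - ε ^ 2) = 0
    rw [hx]; ring
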